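/- With c(n,i) defined by the recurrence c(n,0) = 1/2 and c(n,i) = ((n-2)/n)·c(n-1,i) + (1/n)·c(n-1,i-1) for n ≥ 3, with initial values c(3,0)=1/2, c(3,1)=1/3, c(3,2)=1/6, the function i ↦ c(n,i) is strictly decreasing in i for 0 ≤ i ≤ n-1, for every n ≥ 3. -/

import Mathlib

open Finset Filter

/-- The children-distribution recurrence: `c 2 0 = c 2 1 = 1/2`, `c 2 i = 0` for
`i ≥ 2`, and for `n ≥ 3`: `c n 0 = 1/2` and
`c n i = ((n-2)/n)·c (n-1) i + (1/n)·c (n-1) (i-1)` for `i ≥ 1`. -/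
noncomputable def c : ℕ → ℕ → ℝ
  | 0, _ => 0
  | 1, _ => 0
  | 2, 0 => 1 / 2
  | 2, 1 => 1 / 2
  | 2, _ + 2 => 0
  | _ + 3, 0 => 1 / 2
  | n + 3, i + 1 =>
      (((n : ℝ) + 1) / ((n : ℝ) + 3)) * c (n + 2) (i + 1)
        + (1 / ((n : ℝ) + 3)) * c (n + 2) i

lemma c_le_half : ∀ n i, c n i ≤ 1 / 2 := by
  intro n
  induction n using Nat.strong_induction_on with
  | _ n ih =>
    match n with
    | 0 => intro i; simp [c]
    | 1 => intro i; simp [c]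
    | 2 => intro i
           match i with
           | 0 => simp [c]
           | 1 => simp [c]
           | (k+2) => simp [c]
    | (m+3) =>
      intro i
      match i with
      | 0 => simp [c]
      | (k+1) =>
        have h1 := ih (m+2) (by omega) (k+1)
        have h2 := ih (m+2) (by omega) k
        have hm : (0:ℝ) ≤ (m:ℝ) := Nat.cast_nonneg m
        show (((m : ℝ) + 1) / ((m : ℝ) + 3)) * c (m + 2) (k + 1)
          + (1 / ((m : ℝ) + 3)) * c (m + 2) k ≤ 1/2
        have hpos : (0:ℝ) < (m:ℝ) + 3 := by linarith
        rw [div_mul_eq_mul_div, div_mul_eq_mul_div, ← add_div,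
          div_le_iff₀ hpos]
        nlinarith [h1, h2]

lemma c_anti : ∀ n i, c n (i+1) ≤ c n i := by
  intro n
  induction n using Nat.strong_induction_on with
  | _ n ih =>
    match n with
    | 0 => intro i; simp [c]
    | 1 => intro i; simp [c]
    | 2 => intro i
           match i with
           | 0 => simp [c]
           | 1 => norm_num [c]
           | (k+2) => simp [c]
    | (m+3) =>
      intro i
      have hm : (0:ℝ) ≤ (m:ℝ) := Nat.cast_nonneg m
      have hpos : (0:ℝ) < (m:ℝ) + 3 := by linarith
      match i with
      | 0 =>
        have h1 := c_le_half (m+2) 1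
        have h2 := c_le_half (m+2) 0
        show (((m : ℝ) + 1) / ((m : ℝ) + 3)) * c (m + 2) 1
          + (1 / ((m : ℝ) + 3)) * c (m + 2) 0 ≤ 1/2
        rw [div_mul_eq_mul_div, div_mul_eq_mul_div, ← add_div,
          div_le_iff₀ hpos]
        nlinarith [h1, h2]
      | (k+1) =>
        have h1 := ih (m+2) (by omega) (k+1)
        have h2 := ih (m+2) (by omega) k
        show (((m : ℝ) + 1) / ((m : ℝ) + 3)) * c (m + 2) (k + 2)
          + (1 / ((m : ℝ) + 3)) * c (m + 2) (k+1)
          ≤ (((m : ℝ) + 1) / ((m : ℝ) + 3)) * c (m + 2) (k + 1)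
          + (1 / ((m : ℝ) + 3)) * c (m + 2) k
        have ha : (0:ℝ) ≤ ((m : ℝ) + 1) / ((m : ℝ) + 3) := by positivity
        have hb : (0:ℝ) ≤ 1 / ((m : ℝ) + 3) := by positivity
        have := mul_le_mul_of_nonneg_left h1 ha
        have := mul_le_mul_of_nonneg_left h2 hb
        linarith

lemma c_key : ∀ m : ℕ, ∀ j : ℕ, j ≤ m + 1 → c (m+3) (j+1) < c (m+3) j := by
  intro m
  induction m with
  | zero =>
    intro j hj
    interval_cases j
    · norm_num [c]
    · norm_num [c]
  | succ m ih =>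
    intro j hj
    have hm : (0:ℝ) ≤ (m:ℝ) := Nat.cast_nonneg m
    have hpos : (0:ℝ) < (m:ℝ) + 4 := by linarith
    match j with
    | 0 =>
      have h1 : c (m+3) 1 < 1/2 := by
        have := ih 0 (by omega)
        have h0 : c (m+3) 0 = 1/2 := by show c (m+3) 0 = 1/2; simp [c]
        rw [h0] at this; exact this
      have h0 : c (m+4) 0 = 1/2 := by show c (m+4) 0 = 1/2; simp [c]
      have h03 : c (m+3) 0 = 1/2 := by simp [c]
      have hexp : c (m+4) 1 = (((m : ℝ) + 2) / ((m : ℝ) + 4)) * c (m + 3) 1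
          + (1 / ((m : ℝ) + 4)) * c (m + 3) 0 := by
        show (((↑(m+1) : ℝ) + 1) / ((↑(m+1) : ℝ) + 3)) * c (m + 3) 1
          + (1 / ((↑(m+1) : ℝ) + 3)) * c (m + 3) 0 = _
        push_cast
        ring
      rw [h0, hexp, h03]
      rw [div_mul_eq_mul_div, div_mul_eq_mul_div, ← add_div,
        div_lt_iff₀ hpos]
      nlinarith [h1]
    | (k+1) =>
      have h1 : c (m+3) (k+2) ≤ c (m+3) (k+1) := c_anti (m+3) (k+1)
      have h2 : c (m+3) (k+1) < c (m+3) k := ih k (by omega)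
      have hexp : ∀ t : ℕ, c (m+4) (t+1) = (((m : ℝ) + 2) / ((m : ℝ) + 4)) * c (m + 3) (t+1)
          + (1 / ((m : ℝ) + 4)) * c (m + 3) t := by
        intro t
        show (((↑(m+1) : ℝ) + 1) / ((↑(m+1) : ℝ) + 3)) * c (m + 3) (t+1)
          + (1 / ((↑(m+1) : ℝ) + 3)) * c (m + 3) t = _
        push_cast
        ring
      rw [hexp (k+1), hexp k]
      have ha : (0:ℝ) ≤ ((m : ℝ) + 2) / ((m : ℝ) + 4) := by positivity
      have hb : (0:ℝ) < 1 / ((m : ℝ) + 4) := by positivity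
      have t1 := mul_le_mul_of_nonneg_left h1 ha
      have t2 := mul_lt_mul_of_pos_left h2 hb
      linarith

/-- with the initial values `c(3,0) = 1/2`, `c(3,1) = 1/3`,
`c(3,2) = 1/6`, the map `i ↦ c(n,i)` is strictly decreasing on `0 ≤ i ≤ n-1`
for every `n ≥ 3`. -/
theorem children_strict_decreasing :
    c 3 0 = 1 / 2 ∧ c 3 1 = 1 / 3 ∧ c 3 2 = 1 / 6 ∧
    ∀ n : ℕ, 3 ≤ n → ∀ i : ℕ, 1 ≤ i → i ≤ n - 1 → c n i < c n (i - 1) := by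
  refine ⟨by norm_num [c], by norm_num [c], by norm_num [c], ?_⟩
  intro n hn i hi hni
  obtain ⟨m, rfl⟩ : ∃ m, n = m + 3 := ⟨n - 3, by omega⟩
  obtain ⟨j, rfl⟩ : ∃ j, i = j + 1 := ⟨i - 1, by omega⟩
  simpa using c_key m j (by omega)
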